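/- Adaptive Bernstein inequality: Let X_1, X_2, ... be independent random variables with 0 ≤ X_i ≤ 1 almost surely, S_n = Σ_{i=1}^n (X_i − E X_i), v_m = Σ_{i=1}^m Var(X_i), u_n = 2 ln(log₂(n) + 1) + ln(4/δ), and ε_n = (u_n + √(u_n² + 18 v_{2n} u_n))/(3n). Then P(∃ n ≥ 1 : S_n / n ≥ ε_n) ≤ δ/2. -/

import Mathlib

open MeasureTheory ProbabilityTheory Real

section ABAuxAnalytic
open Finset
open scoped Nat

set_option maxHeartbeats 1000000

lemma ab_exp_tsum (x : ℝ) : Real.exp x = ∑' n : ℕ, x ^ n / n ! := by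
  rw [Real.exp_eq_exp_ℝ, NormedSpace.exp_eq_tsum_div]

lemma ab_summable_shift (x : ℝ) : Summable (fun n : ℕ => x ^ (n + 2) / (n + 2)!) := by
  have := (summable_nat_add_iff (f := fun n : ℕ => x ^ n / n !) 2).2
    (Real.summable_pow_div_factorial x)
  exact this

lemma ab_exp_tail (x : ℝ) : Real.exp x - x - 1 = ∑' n : ℕ, x ^ (n + 2) / (n + 2)! := by
  have h := Summable.sum_add_tsum_nat_add (f := fun n : ℕ => x ^ n / n !) 2
    (Real.summable_pow_div_factorial x)
  rw [ab_exp_tsum x, ← h]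
  simp [Finset.sum_range_succ]
  ring

lemma ab_pointwise {l y : ℝ} (hl : 0 ≤ l) (hy : |y| ≤ 1) :
    Real.exp (l * y) ≤ 1 + l * y + y ^ 2 * (Real.exp l - l - 1) := by
  have hterm : ∀ n : ℕ, (l * y) ^ (n + 2) / (n + 2)! ≤ y ^ 2 * (l ^ (n + 2) / (n + 2)!) := by
    intro n
    have hy2 : y ^ (n + 2) ≤ y ^ 2 :=
      calc y ^ (n + 2) ≤ |y ^ (n + 2)| := le_abs_self _
        _ = |y| ^ (n + 2) := by rw [abs_pow]
        _ ≤ |y| ^ 2 := pow_le_pow_of_le_one (abs_nonneg y) hy (by omega)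
        _ = y ^ 2 := sq_abs y
    calc (l * y) ^ (n + 2) / ((n + 2)! : ℝ)
        = y ^ (n + 2) * (l ^ (n + 2) / ((n + 2)! : ℝ)) := by rw [mul_pow]; ring
      _ ≤ y ^ 2 * (l ^ (n + 2) / ((n + 2)! : ℝ)) :=
          mul_le_mul_of_nonneg_right hy2 (by positivity)
  have key : Real.exp (l * y) - (l * y) - 1 ≤ y ^ 2 * (Real.exp l - l - 1) := by
    rw [ab_exp_tail, ab_exp_tail, ← tsum_mul_left]
    exact Summable.tsum_le_tsum hterm (ab_summable_shift _) ((ab_summable_shift l).mul_left _)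
  linarith

lemma ab_factorial (n : ℕ) : 2 * 3 ^ n ≤ (n + 2)! := by
  induction n with
  | zero => simp [Nat.factorial]
  | succ n ih =>
    have h : (n + 3)! = (n + 3) * (n + 2)! := rfl
    calc 2 * 3 ^ (n + 1) = 3 * (2 * 3 ^ n) := by ring
      _ ≤ 3 * (n + 2)! := by omega
      _ ≤ (n + 3) * (n + 2)! := Nat.mul_le_mul_right _ (by omega)
      _ = (n + 3)! := h.symm

lemma ab_phi_le {l : ℝ} (h0 : 0 ≤ l) (h3 : l < 3) :
    Real.exp l - l - 1 ≤ l ^ 2 / (2 * (1 - l / 3)) := by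
  rw [ab_exp_tail]
  have hgeo : ∑' n : ℕ, (l / 3) ^ n = (1 - l / 3)⁻¹ :=
    tsum_geometric_of_lt_one (by positivity) (by linarith)
  have hsum : Summable (fun n : ℕ => (l / 3) ^ n) :=
    summable_geometric_of_lt_one (by positivity) (by linarith)
  have hterm : ∀ n : ℕ, l ^ (n + 2) / (n + 2)! ≤ l ^ 2 / 2 * (l / 3) ^ n := by
    intro n
    have h1 : l ^ (n + 2) / ((n + 2)! : ℝ) ≤ l ^ (n + 2) / (2 * 3 ^ n) := by
      apply div_le_div_of_nonneg_left (by positivity) (by positivity)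
      exact_mod_cast ab_factorial n
    refine h1.trans (le_of_eq ?_)
    rw [div_pow, pow_add]
    field_simp
  calc (∑' n : ℕ, l ^ (n + 2) / (n + 2)!)
      ≤ ∑' n : ℕ, l ^ 2 / 2 * (l / 3) ^ n :=
        Summable.tsum_le_tsum hterm (ab_summable_shift l) (hsum.mul_left _)
    _ = l ^ 2 / 2 * (1 - l / 3)⁻¹ := by rw [tsum_mul_left, hgeo]
    _ = l ^ 2 / (2 * (1 - l / 3)) := by
        have h13 : (1 : ℝ) - l / 3 ≠ 0 := by intro h; nlinarith
        field_simp


end ABAuxAnalytic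

section ABAuxProb
open Finset
open scoped Nat

variable {Ω : Type*} [MeasureSpace Ω] [IsProbabilityMeasure (ℙ : Measure Ω)]

lemma ab_integrable_of_bound {f : Ω → ℝ} (hf : AEStronglyMeasurable f ℙ) (C : ℝ)
    (h : ∀ᵐ ω, |f ω| ≤ C) : Integrable f ℙ :=
  (integrable_const C).mono' hf (by filter_upwards [h] with ω hω; simpa using hω)

lemma ab_mgf_le {X : Ω → ℝ} (hm : Measurable X) (hb : ∀ᵐ ω, X ω ∈ Set.Icc (0:ℝ) 1)
    {l : ℝ} (hl : 0 ≤ l) :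
    mgf (fun ω => X ω - ∫ ω', X ω' ∂ℙ) ℙ l
      ≤ exp (variance X ℙ * (exp l - l - 1)) := by
  set c : ℝ := ∫ ω', X ω' ∂ℙ with hc
  have hXint : Integrable X ℙ := ab_integrable_of_bound hm.aestronglyMeasurable 1
    (by filter_upwards [hb] with ω hω; rw [abs_le]; exact ⟨by linarith [hω.1], hω.2⟩)
  have hc0 : 0 ≤ c := integral_nonneg_of_ae (by filter_upwards [hb] with ω hω; exact hω.1)
  have hc1 : c ≤ 1 := by
    have := integral_mono_ae hXint (integrable_const 1)
      (by filter_upwards [hb] with ω hω; exact hω.2)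
    simpa using this
  have hY : ∀ᵐ ω, |X ω - c| ≤ 1 := by
    filter_upwards [hb] with ω hω
    rw [abs_le]; exact ⟨by linarith [hω.1], by linarith [hω.2]⟩
  have hYint : Integrable (fun ω => X ω - c) ℙ := hXint.sub (integrable_const c)
  have hEY : ∫ ω, (X ω - c) ∂ℙ = 0 := by
    rw [integral_sub hXint (integrable_const c)]; simp [hc]
  have hY2int : Integrable (fun ω => (X ω - c) ^ 2) ℙ :=
    ab_integrable_of_bound ((hm.sub measurable_const).pow_const 2).aestronglyMeasurable 1
      (by filter_upwards [hY] with ω hω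
          rw [abs_pow]
          nlinarith [abs_nonneg (X ω - c)])
  have hmem : MemLp X 2 ℙ := memLp_of_bounded hb hm.aestronglyMeasurable 2
  have hvar : ∫ ω, (X ω - c) ^ 2 ∂ℙ = variance X ℙ := by
    rw [variance_eq_integral hm.aemeasurable]
  have hexp_int : Integrable (fun ω => exp (l * (X ω - c))) ℙ :=
    ab_integrable_of_bound (((hm.sub measurable_const).const_mul l).exp).aestronglyMeasurable
      (exp l)
      (by filter_upwards [hY] with ω hω
          rw [abs_of_pos (exp_pos _)]
          apply exp_le_exp.2
          calc l * (X ω - c) ≤ l * 1 := by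
                have := (abs_le.1 hω).2; exact mul_le_mul_of_nonneg_left this hl
            _ = l := mul_one l
            )
  have hbd_int : Integrable (fun ω => 1 + l * (X ω - c) + (X ω - c) ^ 2 * (exp l - l - 1)) ℙ :=
    ((integrable_const 1).add (hYint.const_mul l)).add (hY2int.mul_const _)
  have hmono : mgf (fun ω => X ω - c) ℙ l
      ≤ ∫ ω, (1 + l * (X ω - c) + (X ω - c) ^ 2 * (exp l - l - 1)) ∂ℙ := by
    have : mgf (fun ω => X ω - c) ℙ l = ∫ ω, exp (l * (X ω - c)) ∂ℙ := rfl
    rw [this]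
    apply integral_mono_ae hexp_int hbd_int
    filter_upwards [hY] with ω hω
    exact ab_pointwise hl hω
  have hcomp : ∫ ω, (1 + l * (X ω - c) + (X ω - c) ^ 2 * (exp l - l - 1)) ∂ℙ
      = 1 + variance X ℙ * (exp l - l - 1) := by
    have hA : Integrable (fun ω => 1 + l * (X ω - c)) ℙ :=
      (integrable_const 1).add (hYint.const_mul l)
    have hB : Integrable (fun ω => (X ω - c) ^ 2 * (exp l - l - 1)) ℙ := hY2int.mul_const _
    have hC : Integrable (fun _ : Ω => (1 : ℝ)) ℙ := integrable_const 1
    have hD : Integrable (fun ω => l * (X ω - c)) ℙ := hYint.const_mul l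
    rw [integral_add hA hB, integral_add hC hD, integral_const_mul, integral_mul_const, hEY, hvar]
    simp
  calc mgf (fun ω => X ω - c) ℙ l ≤ 1 + variance X ℙ * (exp l - l - 1) := by
        rw [← hcomp]; exact hmono
    _ ≤ exp (variance X ℙ * (exp l - l - 1)) := by
        have := Real.add_one_le_exp (variance X ℙ * (exp l - l - 1))
        linarith

lemma ab_mgf_ge_one {X : Ω → ℝ} (hm : Measurable X) (hb : ∀ᵐ ω, X ω ∈ Set.Icc (0:ℝ) 1)
    {l : ℝ} (hl : 0 ≤ l) :
    1 ≤ mgf (fun ω => X ω - ∫ ω', X ω' ∂ℙ) ℙ l := by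
  set c : ℝ := ∫ ω', X ω' ∂ℙ with hc
  have hXint : Integrable X ℙ := ab_integrable_of_bound hm.aestronglyMeasurable 1
    (by filter_upwards [hb] with ω hω; rw [abs_le]; exact ⟨by linarith [hω.1], hω.2⟩)
  have hc0 : 0 ≤ c := integral_nonneg_of_ae (by filter_upwards [hb] with ω hω; exact hω.1)
  have hc1 : c ≤ 1 := by
    have := integral_mono_ae hXint (integrable_const 1)
      (by filter_upwards [hb] with ω hω; exact hω.2)
    simpa using this
  have hY : ∀ᵐ ω, |X ω - c| ≤ 1 := by
    filter_upwards [hb] with ω hω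
    rw [abs_le]; exact ⟨by linarith [hω.1], by linarith [hω.2]⟩
  have hYint : Integrable (fun ω => X ω - c) ℙ := hXint.sub (integrable_const c)
  have hEY : ∫ ω, (X ω - c) ∂ℙ = 0 := by
    rw [integral_sub hXint (integrable_const c)]; simp [hc]
  have hexp_int : Integrable (fun ω => exp (l * (X ω - c))) ℙ :=
    ab_integrable_of_bound (((hm.sub measurable_const).const_mul l).exp).aestronglyMeasurable
      (exp l)
      (by filter_upwards [hY] with ω hω
          rw [abs_of_pos (exp_pos _)]
          apply exp_le_exp.2
          calc l * (X ω - c) ≤ l * 1 :=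
                mul_le_mul_of_nonneg_left (abs_le.1 hω).2 hl
            _ = l := mul_one l)
  have hlin_int : Integrable (fun ω => 1 + l * (X ω - c)) ℙ :=
    (integrable_const 1).add (hYint.const_mul l)
  have h1 : ∫ ω, (1 + l * (X ω - c)) ∂ℙ ≤ mgf (fun ω => X ω - c) ℙ l := by
    have he : mgf (fun ω => X ω - c) ℙ l = ∫ ω, exp (l * (X ω - c)) ∂ℙ := rfl
    rw [he]
    apply integral_mono_ae hlin_int hexp_int
    filter_upwards with ω
    linarith [Real.add_one_le_exp (l * (X ω - c))]
  have h2 : ∫ ω, (1 + l * (X ω - c)) ∂ℙ = 1 := by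
    have hC : Integrable (fun _ : Ω => (1:ℝ)) ℙ := integrable_const 1
    have hD : Integrable (fun ω => l * (X ω - c)) ℙ := hYint.const_mul l
    rw [integral_add hC hD, integral_const_mul, hEY]
    simp
  linarith

set_option maxHeartbeats 1000000 in
lemma ab_maximal
    (Y : ℕ → Ω → ℝ) (hmeas : ∀ i, Measurable (Y i))
    (hindep : iIndepFun Y ℙ)
    (hbd : ∀ i, ∀ᵐ ω, |Y i ω| ≤ 1)
    {l : ℝ} (hl : 0 ≤ l) (hmgf1 : ∀ i, 1 ≤ mgf (Y i) ℙ l)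
    (t : ℝ) (N : ℕ) :
    (ℙ {ω | ∃ m, m ≤ N ∧ t ≤ ∑ i ∈ Finset.range m, Y i ω}).toReal
      ≤ exp (-(l * t)) * ∏ i ∈ Finset.range N, mgf (Y i) ℙ l := by
  classical
  set S : ℕ → Ω → ℝ := fun m ω => ∑ i ∈ Finset.range m, Y i ω with hS
  have hSmeas : ∀ m, Measurable (S m) := fun m =>
    Finset.measurable_sum _ (fun i _ => hmeas i)
  set A : ℕ → Set Ω := fun m =>
    {ω | t ≤ S m ω} ∩ ⋂ j ∈ Set.Iio m, {ω | S j ω < t} with hA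
  have hAmem : ∀ m ω, ω ∈ A m ↔ (t ≤ S m ω ∧ ∀ j < m, S j ω < t) := by
    intro m ω
    simp [hA, Set.mem_iInter]
  have hAmeas : ∀ m, MeasurableSet (A m) := fun m =>
    ((measurableSet_le measurable_const (hSmeas m))).inter
      (MeasurableSet.biInter (Set.to_countable _)
        (fun j _ => measurableSet_lt (hSmeas j) measurable_const))
  have hdisj0 : ∀ a b : ℕ, a < b → Disjoint (A a) (A b) := by
    intro a b hlt
    rw [Set.disjoint_left]
    intro ω h1 h2
    exact absurd ((hAmem a ω).1 h1).1 (not_le.2 (((hAmem b ω).1 h2).2 a hlt))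
  have hdisj : (↑(Finset.range (N + 1)) : Set ℕ).PairwiseDisjoint A := by
    intro a _ b _ hab
    rcases lt_or_gt_of_ne hab with hcas | hcas
    · exact hdisj0 a b hcas
    · exact (hdisj0 b a hcas).symm
  have hcover : {ω | ∃ m, m ≤ N ∧ t ≤ S m ω} = ⋃ m ∈ Finset.range (N + 1), A m := by
    ext ω
    simp only [Set.mem_setOf_eq, Set.mem_iUnion, Finset.mem_range, exists_prop]
    constructor
    · rintro ⟨m, hm, ht⟩
      have hex : ∃ m, t ≤ S m ω := ⟨m, ht⟩
      refine ⟨Nat.find hex, ?_, (hAmem _ ω).2 ⟨Nat.find_spec hex, fun j hj => ?_⟩⟩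
      · have := Nat.find_min' hex ht; omega
      · exact not_le.1 (Nat.find_min hex hj)
    · rintro ⟨m, hm, hmem⟩
      exact ⟨m, by omega, ((hAmem m ω).1 hmem).1⟩
  have hSbd : ∀ m, ∀ᵐ ω, |S m ω| ≤ m := by
    intro m
    filter_upwards [ae_all_iff.2 hbd] with ω hω
    calc |S m ω| ≤ ∑ i ∈ Finset.range m, |Y i ω| := Finset.abs_sum_le_sum_abs _ _
      _ ≤ ∑ i ∈ Finset.range m, 1 := Finset.sum_le_sum fun i _ => hω i
      _ = m := by simp
  have hEint : ∀ m, Integrable (fun ω => exp (l * S m ω)) ℙ := by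
    intro m
    refine ab_integrable_of_bound (((hSmeas m).const_mul l).exp).aestronglyMeasurable
      (exp (l * m)) ?_
    filter_upwards [hSbd m] with ω hω
    rw [abs_of_pos (exp_pos _)]
    exact exp_le_exp.2 (mul_le_mul_of_nonneg_left ((le_abs_self _).trans hω) hl)
  -- key step
  have hkey : ∀ m, m ≤ N →
      exp (l * t) * (ℙ (A m)).toReal ≤ ∫ ω in A m, exp (l * S N ω) ∂ℙ := by
    intro m hmN
    set g : Ω → ℝ := (A m).indicator (fun ω => exp (l * S m ω)) with hg
    set h : Ω → ℝ := fun ω => exp (l * (S N ω - S m ω)) with hh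
    have hgmeas : Measurable g := Measurable.indicator ((hSmeas m).const_mul l).exp (hAmeas m)
    have hhmeas : Measurable h := (((hSmeas N).sub (hSmeas m)).const_mul l).exp
    -- independence
    have hIndep : IndepFun g h ℙ := by
      have hdST : Disjoint (Finset.range m) (Finset.Ico m N) := by
        rw [Finset.disjoint_left]
        intro a ha hb
        simp only [Finset.mem_range] at ha
        simp only [Finset.mem_Ico] at hb
        omega
      have base := hindep.indepFun_finset (Finset.range m) (Finset.Ico m N) hdST hmeas
      set Tf : ℕ → ({i // i ∈ Finset.range m} → ℝ) → ℝ := fun j p =>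
        ∑ i ∈ (Finset.range m).attach, if (i : ℕ) < j then p i else 0 with hTf
      have hTfmeas : ∀ j, Measurable (Tf j) := by
        intro j
        apply Finset.measurable_sum
        intro i _
        by_cases hij : (i : ℕ) < j
        · simp only [if_pos hij]; exact measurable_pi_apply i
        · simp only [if_neg hij]; exact measurable_const
      have hTeq : ∀ j, j ≤ m → ∀ ω, Tf j (fun i => Y (i : ℕ) ω) = S j ω := by
        intro j hj ω
        rw [hTf]
        dsimp only
        rw [Finset.sum_attach (Finset.range m) (fun n => if n < j then Y n ω else 0)]
        rw [← Finset.sum_filter]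
        congr 1
        ext a
        simp only [Finset.mem_filter, Finset.mem_range]
        omega
      set B : Set ({i // i ∈ Finset.range m} → ℝ) :=
        {p | t ≤ Tf m p} ∩ ⋂ j ∈ Set.Iio m, {p | Tf j p < t} with hB
      have hBmeas : MeasurableSet B :=
        ((measurableSet_le measurable_const (hTfmeas m))).inter
          (MeasurableSet.biInter (Set.to_countable _)
            (fun j _ => measurableSet_lt (hTfmeas j) measurable_const))
      set Phi : ({i // i ∈ Finset.range m} → ℝ) → ℝ :=
        B.indicator (fun p => exp (l * Tf m p)) with hPhi
      have hPhimeas : Measurable Phi := Measurable.indicator ((hTfmeas m).const_mul l).exp hBmeas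
      set Psi : ({i // i ∈ Finset.Ico m N} → ℝ) → ℝ :=
        fun q => exp (l * ∑ i ∈ (Finset.Ico m N).attach, q i) with hPsi
      have hPsimeas : Measurable Psi :=
        ((Finset.measurable_sum _ fun i _ => measurable_pi_apply i).const_mul l).exp
      have hcomp := base.comp hPhimeas hPsimeas
      have hgeq : (Phi ∘ fun ω (i : {i // i ∈ Finset.range m}) => Y (i : ℕ) ω) = g := by
        funext ω
        have hBiff : (fun i : {i // i ∈ Finset.range m} => Y (i : ℕ) ω) ∈ B ↔ ω ∈ A m := by
          rw [hAmem]
          simp only [hB, Set.mem_inter_iff, Set.mem_setOf_eq, Set.mem_iInter, Set.mem_Iio]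
          constructor
          · rintro ⟨h1, h2⟩
            exact ⟨by rwa [hTeq m le_rfl] at h1,
              fun j hj => by rw [← hTeq j hj.le ω]; exact h2 j hj⟩
          · rintro ⟨h1, h2⟩
            exact ⟨by rwa [hTeq m le_rfl], fun j hj => by rw [hTeq j hj.le ω]; exact h2 j hj⟩
        simp only [Function.comp_apply, hPhi, hg, Set.indicator_apply]
        by_cases hω : ω ∈ A m
        · rw [if_pos (hBiff.2 hω), if_pos hω, hTeq m le_rfl]
        · rw [if_neg (fun hmem => hω (hBiff.1 hmem)), if_neg hω]
      have hheq : (Psi ∘ fun ω (i : {i // i ∈ Finset.Ico m N}) => Y (i : ℕ) ω) = h := by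
        funext ω
        simp only [Function.comp_apply, hPsi, hh]
        congr 1
        rw [Finset.sum_attach (Finset.Ico m N) (fun n => Y n ω),
          Finset.sum_Ico_eq_sub (fun n => Y n ω) hmN]
      rw [← hgeq, ← hheq]
      exact hcomp
    -- product of integrals
    have hgint : Integrable g ℙ := (hEint m).indicator (hAmeas m)
    have hprod : ∫ ω in A m, exp (l * S N ω) ∂ℙ = (∫ ω, g ω ∂ℙ) * ∫ ω, h ω ∂ℙ := by
      have hgh : (g * h) = (A m).indicator (fun ω => exp (l * S N ω)) := by
        funext ω
        by_cases hω : ω ∈ A m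
        · simp only [Pi.mul_apply, hg, hh, Set.indicator_of_mem hω, ← Real.exp_add]
          congr 1
          ring
        · simp [hg, hh, Set.indicator_of_notMem hω]
      rw [← integral_indicator (hAmeas m), ← hgh]
      exact hIndep.integral_mul_eq_mul_integral hgmeas.aestronglyMeasurable hhmeas.aestronglyMeasurable
    -- lower bound on ∫ g
    have hgl : exp (l * t) * (ℙ (A m)).toReal ≤ ∫ ω, g ω ∂ℙ := by
      rw [hg, integral_indicator (hAmeas m)]
      have h1 : ∫ _ω in A m, exp (l * t) ∂ℙ ≤ ∫ ω in A m, exp (l * S m ω) ∂ℙ := by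
        apply setIntegral_mono_on integrableOn_const
          ((hEint m).integrableOn) (hAmeas m)
        intro ω hω
        exact exp_le_exp.2 (mul_le_mul_of_nonneg_left ((hAmem m ω).1 hω).1 hl)
      rw [setIntegral_const] at h1
      rw [smul_eq_mul, mul_comm] at h1
      exact h1
    -- lower bound on ∫ h
    have hhl : 1 ≤ ∫ ω, h ω ∂ℙ := by
      have hsum_apply : ∀ ω : Ω, S N ω - S m ω = (∑ i ∈ Finset.Ico m N, Y i) ω := by
        intro ω
        rw [Finset.sum_apply]
        exact (Finset.sum_Ico_eq_sub (fun n => Y n ω) hmN).symm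
      have heq : ∫ ω, h ω ∂ℙ = mgf (∑ i ∈ Finset.Ico m N, Y i) ℙ l := by
        rw [hh]
        simp only [hsum_apply]
        rfl
      rw [heq, hindep.mgf_sum hmeas]
      calc (1:ℝ) = ∏ _i ∈ Finset.Ico m N, (1:ℝ) := by simp
        _ ≤ ∏ i ∈ Finset.Ico m N, mgf (Y i) ℙ l :=
            Finset.prod_le_prod (fun i _ => zero_le_one) (fun i _ => hmgf1 i)
    have hg0 : 0 ≤ exp (l * t) * (ℙ (A m)).toReal := by positivity
    calc exp (l * t) * (ℙ (A m)).toReal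
        = exp (l * t) * (ℙ (A m)).toReal * 1 := (mul_one _).symm
      _ ≤ (∫ ω, g ω ∂ℙ) * ∫ ω, h ω ∂ℙ :=
          mul_le_mul hgl hhl zero_le_one (hg0.trans hgl)
      _ = ∫ ω in A m, exp (l * S N ω) ∂ℙ := hprod.symm
  -- assemble
  have htot : ∫ ω, exp (l * S N ω) ∂ℙ = ∏ i ∈ Finset.range N, mgf (Y i) ℙ l := by
    have h2 : ∀ ω : Ω, S N ω = (∑ i ∈ Finset.range N, Y i) ω := by
      intro ω
      rw [Finset.sum_apply]
    calc ∫ ω, exp (l * S N ω) ∂ℙ = mgf (∑ i ∈ Finset.range N, Y i) ℙ l := by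
          simp only [h2]; rfl
      _ = ∏ i ∈ Finset.range N, mgf (Y i) ℙ l := hindep.mgf_sum hmeas _
  have hunion : ∑ m ∈ Finset.range (N + 1), ∫ ω in A m, exp (l * S N ω) ∂ℙ
      = ∫ ω in ⋃ m ∈ Finset.range (N + 1), A m, exp (l * S N ω) ∂ℙ :=
    (integral_biUnion_finset _ (fun m _ => hAmeas m) hdisj
      (fun m _ => (hEint N).integrableOn)).symm
  have hle2 : ∫ ω in ⋃ m ∈ Finset.range (N + 1), A m, exp (l * S N ω) ∂ℙ
      ≤ ∫ ω, exp (l * S N ω) ∂ℙ :=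
    setIntegral_le_integral (hEint N) (Filter.Eventually.of_forall fun ω => (exp_pos _).le)
  have hPsum : ℙ {ω | ∃ m, m ≤ N ∧ t ≤ S m ω}
      = ∑ m ∈ Finset.range (N + 1), ℙ (A m) := by
    rw [hcover]
    exact measure_biUnion_finset hdisj (fun m _ => hAmeas m)
  have hmain : exp (l * t) * (ℙ {ω | ∃ m, m ≤ N ∧ t ≤ S m ω}).toReal
      ≤ ∏ i ∈ Finset.range N, mgf (Y i) ℙ l := by
    rw [hPsum, ENNReal.toReal_sum (fun m _ => measure_ne_top _ _), Finset.mul_sum]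
    calc ∑ m ∈ Finset.range (N + 1), exp (l * t) * (ℙ (A m)).toReal
        ≤ ∑ m ∈ Finset.range (N + 1), ∫ ω in A m, exp (l * S N ω) ∂ℙ :=
          Finset.sum_le_sum fun m hm => hkey m (by simp only [Finset.mem_range] at hm; omega)
      _ = ∫ ω in ⋃ m ∈ Finset.range (N + 1), A m, exp (l * S N ω) ∂ℙ := hunion
      _ ≤ ∫ ω, exp (l * S N ω) ∂ℙ := hle2
      _ = ∏ i ∈ Finset.range N, mgf (Y i) ℙ l := htot
  rw [exp_neg]
  rw [← le_div_iff₀' (exp_pos (l * t))] at hmain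
  rw [div_eq_inv_mul] at hmain
  exact hmain


end ABAuxProb

section ABAuxSums
open Finset

lemma ab_sum_sq_le (n : ℕ) :
    ∑ k ∈ Finset.range (n + 1), (1:ℝ)/((k:ℝ)+1)^2 ≤ 2 - 1/((n:ℝ)+1) := by
  induction n with
  | zero => norm_num
  | succ n ih =>
    rw [Finset.sum_range_succ]
    have h1 : (0:ℝ) < (n:ℝ)+1 := by positivity
    have h2 : (0:ℝ) < (n:ℝ)+2 := by positivity
    have hstep : (1:ℝ)/(((n:ℕ):ℝ)+1+1)^2 ≤ 1/((n:ℝ)+1) - 1/((n:ℝ)+1+1) := by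
      rw [div_sub_div _ _ (ne_of_gt h1) (by positivity),
        div_le_div_iff₀ (by positivity) (by positivity)]
      nlinarith [sq_nonneg ((n:ℝ)+1)]
    push_cast at *
    linarith

lemma ab_alg {V T U : ℝ} (hV : 0 < V) (hT : 0 < T) (hq : T^2 = 2*U*(V + T/3)) :
    V * ((T/(V+T/3))^2 / (2*(1 - (T/(V+T/3))/3))) = U := by
  have hD : 0 < V + T/3 := by linarith
  have h13 : 1 - (T/(V+T/3))/3 = V/(V+T/3) := by field_simp; ring
  rw [h13]
  field_simp
  linear_combination 3 * hq

lemma ab_tsum_sq_le : ∑' k : ℕ, (1:ℝ)/((k:ℝ)+1)^2 ≤ 2 := by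
  have hsum : Summable (fun k : ℕ => (1:ℝ)/((k:ℝ)+1)^2) := by
    have h1 : Summable (fun n : ℕ => (1:ℝ)/(n:ℝ)^2) := by
      exact_mod_cast summable_one_div_nat_pow.2 (by norm_num)
    have := (summable_nat_add_iff 1).2 h1
    simpa using this
  apply hsum.tsum_le_of_sum_range_le
  intro n
  match n with
  | 0 => simp
  | Nat.succ m =>
    have := ab_sum_sq_le m
    have h1 : (0:ℝ) < 1/((m:ℝ)+1) := by positivity
    linarith


end ABAuxSums

open Finset in
set_option maxHeartbeats 1000000 in
theorem adaptive_bernstein_inequality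
    {Ω : Type*} [MeasureSpace Ω] [IsProbabilityMeasure (ℙ : Measure Ω)]
    (X : ℕ → Ω → ℝ)
    (hmeas : ∀ i, Measurable (X i))
    (hindep : iIndepFun X ℙ)
    (hbound : ∀ i, ∀ᵐ ω, X i ω ∈ Set.Icc (0 : ℝ) 1)
    (δ : ℝ) (hδ : δ ∈ Set.Ioo (0 : ℝ) 1)
    (u : ℕ → ℝ) (hu : ∀ n, u n = 2 * log (logb 2 n + 1) + log (4 / δ))
    (v : ℕ → ℝ) (hv : ∀ m, v m = ∑ i ∈ Finset.range m, variance (X i) ℙ)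
    (ε : ℕ → ℝ)
    (hε : ∀ n, ε n = (u n + Real.sqrt ((u n) ^ 2 + 18 * v (2 * n) * u n)) / (3 * n)) :
    ℙ {ω | ∃ n : ℕ, 1 ≤ n ∧
            ε n ≤ (∑ i ∈ Finset.range n, (X i ω - ∫ ω', X i ω' ∂ℙ)) / n}
      ≤ ENNReal.ofReal (δ / 2) := by
  classical
  obtain ⟨hδ0, hδ1⟩ := hδ
  have hδ4 : (0:ℝ) < 4 / δ := by positivity
  set c : ℕ → ℝ := fun i => ∫ ω', X i ω' ∂ℙ with hcdef
  set Y : ℕ → Ω → ℝ := fun i ω => X i ω - c i with hYdef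
  have hYmeas : ∀ i, Measurable (Y i) := fun i => (hmeas i).sub measurable_const
  have hYindep : iIndepFun Y ℙ := by
    have := hindep.comp (g := fun i (x : ℝ) => x - c i)
      (fun i => measurable_id.sub measurable_const)
    exact this
  have hYbd : ∀ i, ∀ᵐ ω, |Y i ω| ≤ 1 := by
    intro i
    have hXint : Integrable (X i) ℙ := ab_integrable_of_bound (hmeas i).aestronglyMeasurable 1
      (by filter_upwards [hbound i] with ω hω; rw [abs_le]; exact ⟨by linarith [hω.1], hω.2⟩)
    have hc0 : 0 ≤ c i := integral_nonneg_of_ae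
      (by filter_upwards [hbound i] with ω hω; exact hω.1)
    have hc1 : c i ≤ 1 := by
      have := integral_mono_ae hXint (integrable_const 1)
        (by filter_upwards [hbound i] with ω hω; exact hω.2)
      simpa [hcdef] using this
    filter_upwards [hbound i] with ω hω
    rw [abs_le]
    exact ⟨by simp only [hYdef]; linarith [hω.1], by simp only [hYdef]; linarith [hω.2]⟩
  -- u and v facts
  have hukval : ∀ k : ℕ, u (2 ^ k) = 2 * log ((k:ℝ) + 1) + log (4 / δ) := by
    intro k
    rw [hu]
    have h2 : Real.logb 2 (((2:ℕ) ^ k : ℕ) : ℝ) = k := by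
      push_cast
      rw [Real.logb_pow, Real.logb_self_eq_one (by norm_num)]
      ring
    rw [h2]
  have hupos : ∀ k : ℕ, 0 < u (2 ^ k) := by
    intro k
    rw [hukval]
    have h1 : 0 ≤ log ((k:ℝ) + 1) := Real.log_nonneg (by push_cast; linarith)
    have h2 : 0 < log (4 / δ) := Real.log_pos (by rw [lt_div_iff₀ hδ0]; linarith)
    linarith
  have humono : ∀ k n : ℕ, 2 ^ k ≤ n → u (2 ^ k) ≤ u n := by
    intro k n hkn
    rw [hukval, hu]
    have hn0 : (0:ℝ) < (n:ℕ) := by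
      have : 0 < n := lt_of_lt_of_le (Nat.pow_pos (by norm_num)) hkn
      exact_mod_cast this
    have hlogb : (k:ℝ) ≤ Real.logb 2 n := by
      have h2 : Real.logb 2 (((2:ℕ) ^ k : ℕ) : ℝ) = k := by
        push_cast
        rw [Real.logb_pow, Real.logb_self_eq_one (by norm_num)]
        ring
      rw [← h2]
      apply Real.logb_le_logb_of_le (by norm_num)
      · positivity
      · exact_mod_cast hkn
    have hlog : log ((k:ℝ) + 1) ≤ log (Real.logb 2 n + 1) :=
      Real.log_le_log (by positivity) (by linarith)
    linarith
  have hvnonneg : ∀ m, 0 ≤ v m := by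
    intro m
    rw [hv]
    exact Finset.sum_nonneg fun i _ => variance_nonneg _ _
  have hvmono : ∀ a b : ℕ, a ≤ b → v a ≤ v b := by
    intro a b hab
    rw [hv, hv]
    exact Finset.sum_le_sum_of_subset_of_nonneg
      (Finset.range_subset_range.2 hab) (fun i _ _ => variance_nonneg _ _)
  set tk : ℕ → ℝ := fun k =>
    (u (2 ^ k) + Real.sqrt ((u (2 ^ k)) ^ 2 + 18 * v (2 ^ (k + 1)) * u (2 ^ k))) / 3 with htk
  set B : ℕ → Set Ω := fun k =>
    {ω | ∃ m, m ≤ 2 ^ (k + 1) ∧ tk k ≤ ∑ i ∈ Finset.range m, Y i ω} with hB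
  -- cover
  have hcover : {ω | ∃ n : ℕ, 1 ≤ n ∧
      ε n ≤ (∑ i ∈ Finset.range n, (X i ω - c i)) / n} ⊆ ⋃ k, B k := by
    intro ω hω
    obtain ⟨n, hn1, hεle⟩ := hω
    set k := Nat.log 2 n with hk
    have h2k : 2 ^ k ≤ n := Nat.pow_log_le_self 2 (by omega)
    have h2k1 : n < 2 ^ (k + 1) := Nat.lt_pow_succ_log_self (by norm_num) n
    have hn0 : (0:ℝ) < (n:ℝ) := by exact_mod_cast Nat.pos_of_ne_zero (by omega)
    have hSsum : ∑ i ∈ Finset.range n, (X i ω - c i) = ∑ i ∈ Finset.range n, Y i ω := rfl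
    have hSge : (n:ℝ) * ε n ≤ ∑ i ∈ Finset.range n, Y i ω := by
      rw [← hSsum]
      have := (le_div_iff₀ hn0).1 hεle
      linarith
    have hnε : (n:ℝ) * ε n
        = (u n + Real.sqrt ((u n) ^ 2 + 18 * v (2 * n) * u n)) / 3 := by
      rw [hε n]
      field_simp
    have hu1 : 0 < u (2 ^ k) := hupos k
    have hu2 : u (2 ^ k) ≤ u n := humono k n h2k
    have hvle : v (2 ^ (k + 1)) ≤ v (2 * n) := by
      apply hvmono
      have : 2 ^ (k + 1) = 2 * 2 ^ k := by ring
      omega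
    have hsq : Real.sqrt ((u (2 ^ k)) ^ 2 + 18 * v (2 ^ (k + 1)) * u (2 ^ k))
        ≤ Real.sqrt ((u n) ^ 2 + 18 * v (2 * n) * u n) := by
      apply Real.sqrt_le_sqrt
      have h18 : 18 * v (2 ^ (k + 1)) * u (2 ^ k) ≤ 18 * v (2 * n) * u n := by
        apply mul_le_mul (by linarith [hvle]) hu2 hu1.le
        have := hvnonneg (2 * n)
        linarith
      nlinarith
    apply Set.mem_iUnion.2
    refine ⟨k, n, by omega, ?_⟩
    calc tk k ≤ (u n + Real.sqrt ((u n) ^ 2 + 18 * v (2 * n) * u n)) / 3 := by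
          rw [htk]
          have := add_le_add hu2 hsq
          linarith
      _ = (n:ℝ) * ε n := hnε.symm
      _ ≤ ∑ i ∈ Finset.range n, Y i ω := hSge
  -- block bound
  have hblock : ∀ k : ℕ, ℙ (B k) ≤ ENNReal.ofReal (δ/4 * (1/((k:ℝ)+1)^2)) := by
    intro k
    set uk := u (2 ^ k) with huk
    set vv := v (2 ^ (k + 1)) with hvv
    have hukpos : 0 < uk := hupos k
    have hvv0 : 0 ≤ vv := hvnonneg _
    set s := Real.sqrt (uk ^ 2 + 18 * vv * uk) with hsdef
    have hs2 : s ^ 2 = uk ^ 2 + 18 * vv * uk := Real.sq_sqrt (by positivity)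
    have hs0 : 0 ≤ s := Real.sqrt_nonneg _
    have hsge : uk ≤ s := by
      have h1 : Real.sqrt (uk ^ 2) ≤ s := Real.sqrt_le_sqrt (by nlinarith)
      rwa [Real.sqrt_sq hukpos.le] at h1
    have httval : tk k = (uk + s) / 3 := rfl
    set tt := tk k with htt2
    have httpos : 0 < tt := by rw [httval]; linarith
    have hq : tt ^ 2 = 2 * uk * (vv + tt / 3) := by
      rw [httval]; nlinarith [hs2]
    set d := vv + tt / 3 with hd
    have hdpos : 0 < d := by rw [hd]; linarith
    set l := tt / d with hldef
    have hl0 : 0 ≤ l := by positivity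
    have hlt : l * tt = 2 * uk := by
      rw [hldef]
      field_simp
      nlinarith [hq]
    have hvφ : vv * (exp l - l - 1) ≤ uk := by
      rcases eq_or_lt_of_le hvv0 with hv0 | hv0
      · rw [← hv0]; simpa using hukpos.le
      · have hl3 : l < 3 := by
          rw [hldef, div_lt_iff₀ hdpos, hd]
          linarith
        have hφ := ab_phi_le hl0 hl3
        have heq : vv * (l ^ 2 / (2 * (1 - l / 3))) = uk := by
          have hq' : tt ^ 2 = 2 * uk * (vv + tt / 3) := by rw [hq, hd]
          have := ab_alg hv0 httpos hq'
          rw [hldef, hd]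
          exact this
        calc vv * (exp l - l - 1) ≤ vv * (l ^ 2 / (2 * (1 - l / 3))) :=
              mul_le_mul_of_nonneg_left hφ hvv0
          _ = uk := heq
    have hmgf1 : ∀ i, 1 ≤ mgf (Y i) ℙ l := fun i => ab_mgf_ge_one (hmeas i) (hbound i) hl0
    have hmax := ab_maximal Y hYmeas hYindep hYbd hl0 hmgf1 tt (2 ^ (k + 1))
    have hprodle : ∏ i ∈ Finset.range (2 ^ (k + 1)), mgf (Y i) ℙ l
        ≤ exp (vv * (exp l - l - 1)) := by
      calc ∏ i ∈ Finset.range (2 ^ (k + 1)), mgf (Y i) ℙ l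
          ≤ ∏ i ∈ Finset.range (2 ^ (k + 1)), exp (variance (X i) ℙ * (exp l - l - 1)) :=
            Finset.prod_le_prod (fun i _ => mgf_nonneg) (fun i _ => ab_mgf_le (hmeas i) (hbound i) hl0)
        _ = exp (∑ i ∈ Finset.range (2 ^ (k + 1)), variance (X i) ℙ * (exp l - l - 1)) :=
            (Real.exp_sum _ _).symm
        _ = exp (vv * (exp l - l - 1)) := by
            rw [hvv, hv, ← Finset.sum_mul]
    have hexpval : exp (-uk) = δ/4 * (1/((k:ℝ)+1)^2) := by
      rw [huk, hukval k]
      rw [show (2:ℝ) * log ((k:ℝ)+1) = log (((k:ℝ)+1)^2) by rw [Real.log_pow]; push_cast; ring]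
      rw [neg_add, Real.exp_add, Real.exp_neg, Real.exp_neg,
        Real.exp_log (by positivity), Real.exp_log hδ4]
      field_simp
    have hfinal : (ℙ (B k)).toReal ≤ δ/4 * (1/((k:ℝ)+1)^2) := by
      calc (ℙ (B k)).toReal
          ≤ exp (-(l * tt)) * ∏ i ∈ Finset.range (2 ^ (k + 1)), mgf (Y i) ℙ l := hmax
        _ ≤ exp (-(l * tt)) * exp (vv * (exp l - l - 1)) :=
            mul_le_mul_of_nonneg_left hprodle (exp_pos _).le
        _ = exp (-(l * tt) + vv * (exp l - l - 1)) := (Real.exp_add _ _).symm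
        _ ≤ exp (-uk) := by
            apply exp_le_exp.2
            rw [hlt]
            linarith
        _ = δ/4 * (1/((k:ℝ)+1)^2) := hexpval
    exact (ENNReal.le_ofReal_iff_toReal_le (measure_ne_top _ _) (by positivity)).2 hfinal
  -- assemble
  have hsummable : Summable (fun k : ℕ => δ/4 * (1/((k:ℝ)+1)^2)) := by
    apply Summable.mul_left
    have h1 : Summable (fun n : ℕ => (1:ℝ)/(n:ℝ)^2) := by
      exact_mod_cast summable_one_div_nat_pow.2 (by norm_num)
    have := (summable_nat_add_iff 1).2 h1
    simpa using this
  calc ℙ {ω | ∃ n : ℕ, 1 ≤ n ∧ ε n ≤ (∑ i ∈ Finset.range n, (X i ω - c i)) / n}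
      ≤ ℙ (⋃ k, B k) := measure_mono hcover
    _ ≤ ∑' k, ℙ (B k) := measure_iUnion_le _
    _ ≤ ∑' k : ℕ, ENNReal.ofReal (δ/4 * (1/((k:ℝ)+1)^2)) := ENNReal.tsum_le_tsum hblock
    _ = ENNReal.ofReal (∑' k : ℕ, δ/4 * (1/((k:ℝ)+1)^2)) :=
        (ENNReal.ofReal_tsum_of_nonneg (fun k => by positivity) hsummable).symm
    _ ≤ ENNReal.ofReal (δ / 2) := by
        apply ENNReal.ofReal_le_ofReal
        rw [tsum_mul_left]
        have h2 := ab_tsum_sq_le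
        calc δ/4 * ∑' k : ℕ, (1:ℝ)/((k:ℝ)+1)^2 ≤ δ/4 * 2 :=
              mul_le_mul_of_nonneg_left h2 (by positivity)
          _ = δ/2 := by ring
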